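/- Let p be an odd prime and f : F_{p^n} → F_p a weakly regular bent function with dual f*, so W_f(v) = u · p^{n/2} ω^{f*(v)} for a fixed unimodular constant u. Then for all b, c ∈ F_{p^n}: W_{D_c f}(b) = ω^{Tr_n(bc)} W_{D_b f*}(−c). -/

import Mathlib

open Finset
open scoped Classical

noncomputable instance (p n : ℕ) [Fact p.Prime] : Fintype (GaloisField p n) :=
  Fintype.ofFinite _

noncomputable def omg (p : ℕ) : ℂ := Complex.exp (2 * Real.pi * Complex.I / p)

noncomputable def ee (p : ℕ) (c : ZMod p) : ℂ := omg p ^ c.val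

noncomputable def Tr (p n : ℕ) [Fact p.Prime] (x : GaloisField p n) : ZMod p :=
  Algebra.trace (ZMod p) (GaloisField p n) x

noncomputable def W (p n : ℕ) [Fact p.Prime] (f : GaloisField p n → ZMod p)
    (y : GaloisField p n) : ℂ :=
  ∑ x : GaloisField p n, ee p (f x - Tr p n (x * y))

noncomputable def D (p n : ℕ) [Fact p.Prime] (a : GaloisField p n) (f : GaloisField p n → ZMod p)
    (x : GaloisField p n) : ZMod p :=
  f (x + a) - f x

noncomputable def D2 (p n : ℕ) [Fact p.Prime] (a b : GaloisField p n) (f : GaloisField p n → ZMod p)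
    (x : GaloisField p n) : ZMod p :=
  f (x + a + b) - f (x + a) - f (x + b) + f x

def IsBalanced (p n : ℕ) [Fact p.Prime] (f : GaloisField p n → ZMod p) : Prop :=
  ∀ c : ZMod p, (Finset.univ.filter (fun x => f x = c)).card = p ^ (n - 1)

def Bent (p n : ℕ) [Fact p.Prime] (f : GaloisField p n → ZMod p) : Prop :=
  ∀ y : GaloisField p n, ‖W p n f y‖ ^ 2 = (p : ℝ) ^ n

def IsQuadratic (p n : ℕ) [Fact p.Prime] (f : GaloisField p n → ZMod p) : Prop :=
  ∀ a b : GaloisField p n, ∃ c : ZMod p, ∀ x, D2 p n a b f x = c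

def IsCubic (p n : ℕ) [Fact p.Prime] (f : GaloisField p n → ZMod p) : Prop :=
  ∀ a b c : GaloisField p n, ∃ l : ZMod p, ∀ x, D2 p n b c f (x + a) - D2 p n b c f x = l

section Aux

variable (p n : ℕ) [hp : Fact p.Prime]

lemma omg_pow (k : ℕ) : omg p ^ k = Complex.exp (2 * Real.pi * Complex.I * k / p) := by
  rw [omg, ← Complex.exp_nat_mul]
  congr 1
  ring

lemma omg_pow_p : omg p ^ p = 1 := by
  have hp0 : (p : ℂ) ≠ 0 := Nat.cast_ne_zero.mpr hp.out.ne_zero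
  rw [omg_pow, mul_div_assoc, div_self hp0, mul_one, Complex.exp_two_pi_mul_I]

lemma ee_add (a b : ZMod p) : ee p (a + b) = ee p a * ee p b := by
  haveI : NeZero p := ⟨hp.out.ne_zero⟩
  rw [ee, ee, ee, ZMod.val_add, ← pow_eq_pow_mod _ (omg_pow_p p), pow_add]

lemma ee_zero : ee p (0 : ZMod p) = 1 := by
  haveI : NeZero p := ⟨hp.out.ne_zero⟩
  rw [ee, ZMod.val_zero, pow_zero]

lemma ee_neg (a : ZMod p) : ee p (-a) = (ee p a)⁻¹ := by
  have h : ee p (-a) * ee p a = 1 := by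
    rw [← ee_add, neg_add_cancel, ee_zero]
  exact eq_inv_of_mul_eq_one_left h

lemma omg_eq : omg p = Complex.exp (((2 * Real.pi / p : ℝ) : ℂ) * Complex.I) := by
  rw [omg]
  congr 1
  push_cast
  ring

lemma abs_ee (a : ZMod p) : ‖ee p a‖ = 1 := by
  rw [ee, norm_pow, omg_eq, Complex.norm_exp_ofReal_mul_I, one_pow]

lemma conj_ee (a : ZMod p) : (starRingEnd ℂ) (ee p a) = ee p (-a) := by
  rw [ee_neg, Complex.inv_eq_conj (abs_ee p a)]

lemma ee_eq_one (a : ZMod p) (h : ee p a = 1) : a = 0 := by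
  haveI : NeZero p := ⟨hp.out.ne_zero⟩
  rw [ee, omg_pow, Complex.exp_eq_one_iff] at h
  obtain ⟨k, hk⟩ := h
  have hp0 : (p : ℂ) ≠ 0 := Nat.cast_ne_zero.mpr hp.out.ne_zero
  have h2 : (2 * (Real.pi : ℂ) * Complex.I) ≠ 0 := by
    refine mul_ne_zero (mul_ne_zero two_ne_zero ?_) Complex.I_ne_zero
    exact_mod_cast Real.pi_ne_zero
  have hval : ((a.val : ℂ)) = (k : ℂ) * p := by
    have hk' : 2 * (Real.pi : ℂ) * Complex.I * (a.val : ℂ)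
        = 2 * (Real.pi : ℂ) * Complex.I * ((k : ℂ) * p) := by
      have hk' := congrArg (fun z : ℂ => z * p) hk
      simp only [div_mul_cancel₀ _ hp0] at hk'
      linear_combination hk'
    exact mul_left_cancel₀ h2 hk'
  have hvalZ : (a.val : ℤ) = k * p := by exact_mod_cast hval
  have hdvd : p ∣ a.val := by
    have : (p : ℤ) ∣ (a.val : ℤ) := ⟨k, by linarith [hvalZ]⟩
    exact_mod_cast this
  have hlt : a.val < p := ZMod.val_lt a
  exact (ZMod.val_eq_zero a).mp (Nat.eq_zero_of_dvd_of_lt hdvd hlt)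

lemma tr_nondeg {t : GaloisField p n} (ht : t ≠ 0) :
    ∃ x : GaloisField p n, Tr p n (t * x) ≠ 0 := by
  have h := traceForm_nondegenerate (ZMod p) (GaloisField p n) |>.1 t
  simp_rw [Algebra.traceForm_apply] at h
  by_contra! hf
  exact ht (h hf)

lemma sum_char (t : GaloisField p n) :
    ∑ x : GaloisField p n, ee p (Tr p n (t * x))
      = if t = 0 then (Fintype.card (GaloisField p n) : ℂ) else 0 := by
  split_ifs with h
  · subst h
    have : ∀ x : GaloisField p n, ee p (Tr p n ((0 : GaloisField p n) * x)) = 1 := by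
      intro x
      rw [zero_mul, Tr, map_zero, ee_zero]
    simp only [this, Finset.sum_const, card_univ, nsmul_eq_mul, mul_one]
  · obtain ⟨x0, hx0⟩ := tr_nondeg p n h
    have hshift : ∑ x : GaloisField p n, ee p (Tr p n (t * (x + x0)))
        = ∑ x : GaloisField p n, ee p (Tr p n (t * x)) :=
      Equiv.sum_comp (Equiv.addRight x0) (fun x => ee p (Tr p n (t * x)))
    have hsplit : ∀ x : GaloisField p n,
        ee p (Tr p n (t * (x + x0))) = ee p (Tr p n (t * x)) * ee p (Tr p n (t * x0)) := by
      intro x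
      simp only [mul_add, Tr, map_add, ee_add]
    simp only [hsplit, ← Finset.sum_mul] at hshift
    have hne : ee p (Tr p n (t * x0)) ≠ 1 := fun hc => hx0 (ee_eq_one p _ hc)
    by_contra hS
    exact hne (mul_left_cancel₀ hS (by rw [hshift, mul_one]))

lemma claimA (g : GaloisField p n → ZMod p) (b c : GaloisField p n) :
    ∑ y : GaloisField p n,
        W p n g y * (starRingEnd ℂ) (W p n g (y - b)) * ee p (Tr p n (c * y))
      = (Fintype.card (GaloisField p n) : ℂ) * W p n (D p n c g) b := by
  have e1 : ∀ y : GaloisField p n,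
      W p n g y * (starRingEnd ℂ) (W p n g (y - b)) * ee p (Tr p n (c * y))
      = ∑ x : GaloisField p n, ∑ z : GaloisField p n,
          ee p (g x - g z - Tr p n (z * b)) * ee p (Tr p n ((z - x + c) * y)) := by
    intro y
    rw [W, W, map_sum, Finset.sum_mul_sum, Finset.sum_mul]
    refine Finset.sum_congr rfl fun x _ => ?_
    rw [Finset.sum_mul]
    refine Finset.sum_congr rfl fun z _ => ?_
    rw [conj_ee, ← ee_add, ← ee_add, ← ee_add]
    congr 1
    simp only [Tr, mul_sub, sub_mul, add_mul, map_sub, map_add]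
    ring
  simp only [e1]
  rw [Finset.sum_comm]
  have e2 : ∀ x : GaloisField p n,
      (∑ y : GaloisField p n, ∑ z : GaloisField p n,
          ee p (g x - g z - Tr p n (z * b)) * ee p (Tr p n ((z - x + c) * y)))
      = ee p (g x - g (x - c) - Tr p n ((x - c) * b))
          * (Fintype.card (GaloisField p n) : ℂ) := by
    intro x
    rw [Finset.sum_comm]
    have : ∀ z : GaloisField p n,
        (∑ y : GaloisField p n,
            ee p (g x - g z - Tr p n (z * b)) * ee p (Tr p n ((z - x + c) * y)))
        = ee p (g x - g z - Tr p n (z * b))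
            * (if z = x - c then (Fintype.card (GaloisField p n) : ℂ) else 0) := by
      intro z
      rw [← Finset.mul_sum, sum_char, sub_add, sub_eq_zero]
    simp only [this, mul_ite, mul_zero]
    rw [Finset.sum_ite_eq' Finset.univ (x - c)]
    simp
  simp only [e2]
  rw [← Finset.sum_mul, mul_comm]
  congr 1
  rw [W]
  refine (Fintype.sum_equiv (Equiv.addRight c) _ _ fun x => ?_).symm
  simp only [Equiv.coe_addRight, D]
  rw [add_sub_cancel_right]

lemma claimB (f fstar : GaloisField p n → ZMod p) (u : ℂ) (hu : ‖u‖ = 1)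
    (hwr : ∀ v : GaloisField p n,
      W p n f v = u * (Real.sqrt ((p : ℝ) ^ n) : ℂ) * ee p (fstar v))
    (b c : GaloisField p n) :
    ∑ y : GaloisField p n,
        W p n f y * (starRingEnd ℂ) (W p n f (y - b)) * ee p (Tr p n (c * y))
      = (((p : ℝ) ^ n : ℝ) : ℂ)
          * (ee p (Tr p n (b * c)) * W p n (D p n b fstar) (-c)) := by
  have hnormSq : ((Complex.normSq u : ℝ) : ℂ) = 1 := by
    rw [← Complex.sq_norm, hu]
    norm_num
  have h2 : (Real.sqrt ((p : ℝ) ^ n) : ℂ) * (Real.sqrt ((p : ℝ) ^ n) : ℂ)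
      = (((p : ℝ) ^ n : ℝ) : ℂ) := by
    rw [← Complex.ofReal_mul, Real.mul_self_sqrt (by positivity)]
  have hterm : ∀ y : GaloisField p n,
      W p n f y * (starRingEnd ℂ) (W p n f (y - b)) * ee p (Tr p n (c * y))
      = (((p : ℝ) ^ n : ℝ) : ℂ)
          * ee p (fstar y - fstar (y - b) + Tr p n (c * y)) := by
    intro y
    rw [hwr y, hwr (y - b), map_mul, map_mul, conj_ee, Complex.conj_ofReal]
    calc u * (Real.sqrt ((p : ℝ) ^ n) : ℂ) * ee p (fstar y)
          * ((starRingEnd ℂ) u * (Real.sqrt ((p : ℝ) ^ n) : ℂ) * ee p (-(fstar (y - b))))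
          * ee p (Tr p n (c * y))
        = (u * (starRingEnd ℂ) u)
            * ((Real.sqrt ((p : ℝ) ^ n) : ℂ) * (Real.sqrt ((p : ℝ) ^ n) : ℂ))
            * (ee p (fstar y) * ee p (-(fstar (y - b))) * ee p (Tr p n (c * y))) := by
          ring
      _ = (((p : ℝ) ^ n : ℝ) : ℂ)
            * ee p (fstar y - fstar (y - b) + Tr p n (c * y)) := by
          rw [Complex.mul_conj, hnormSq, one_mul, h2, ← ee_add, ← ee_add]
          congr 2
          ring
  simp only [hterm]
  rw [← Finset.mul_sum]
  congr 1
  have hre : ∑ y : GaloisField p n, ee p (fstar y - fstar (y - b) + Tr p n (c * y))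
      = ∑ t : GaloisField p n, ee p (fstar (t + b) - fstar t + Tr p n (c * (t + b))) :=
    (Equiv.sum_comp (Equiv.addRight b)
      (fun y => ee p (fstar y - fstar (y - b) + Tr p n (c * y)))).symm.trans
      (Finset.sum_congr rfl fun t _ => by rw [Equiv.coe_addRight, add_sub_cancel_right])
  rw [hre, W, Finset.mul_sum]
  refine Finset.sum_congr rfl fun t _ => ?_
  rw [← ee_add]
  congr 1
  have ht : t * (-c) = -(c * t) := by ring
  have hbc : b * c = c * b := by ring
  rw [D, ht, hbc]
  simp only [Tr, mul_add, map_add, map_neg]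
  ring

end Aux

theorem stmt_11 (p n : ℕ) [Fact p.Prime] (hp : Odd p)
    (f fstar : GaloisField p n → ZMod p) (u : ℂ) (hu : ‖u‖ = 1)
    (hwr : ∀ v : GaloisField p n,
      W p n f v = u * (Real.sqrt ((p : ℝ) ^ n) : ℂ) * ee p (fstar v)) :
    ∀ b c : GaloisField p n,
      W p n (D p n c f) b = ee p (Tr p n (b * c)) * W p n (D p n b fstar) (-c) := by
  intro b c
  set q : ℂ := (Fintype.card (GaloisField p n) : ℂ) with hq_def
  have hq : q ≠ 0 := Nat.cast_ne_zero.mpr Fintype.card_ne_zero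
  have hW0 : ∀ g : GaloisField p n → ZMod p, W p n (D p n (0 : GaloisField p n) g) 0 = q := by
    intro g
    rw [W]
    have : ∀ x : GaloisField p n,
        ee p (D p n (0 : GaloisField p n) g x - Tr p n (x * 0)) = 1 := by
      intro x
      rw [D, add_zero, mul_zero, Tr, map_zero, sub_self, sub_zero, ee_zero]
    simp only [this, Finset.sum_const, card_univ, nsmul_eq_mul, mul_one, hq_def]
  have h00 := (claimA p n f 0 0).symm.trans (claimB p n f fstar u hu hwr 0 0)
  rw [← hq_def, neg_zero, hW0 f, hW0 fstar] at h00
  have hTr00 : ee p (Tr p n ((0 : GaloisField p n) * 0)) = 1 := by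
    rw [zero_mul, Tr, map_zero, ee_zero]
  rw [hTr00, one_mul] at h00
  have hQq : (((p : ℝ) ^ n : ℝ) : ℂ) = q := (mul_right_cancel₀ hq h00).symm
  have hbc := (claimA p n f b c).symm.trans (claimB p n f fstar u hu hwr b c)
  rw [hQq] at hbc
  exact mul_left_cancel₀ hq hbc
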